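/- Let Q be a positive integer and N an even natural number with N ≥ 2; write N̲ = N/2. Let s : Fin N̲ → ZMod Q be an LWE secret and let (a₁, b₁) and (a₂, b₂) be two LWE ciphertexts with a₁, a₂ : Fin N̲ → ZMod Q, messages m₁, m₂ ∈ ZMod Q and noises e₁, e₂ ∈ ZMod Q, i.e., bᵢ = Σ_{k<N̲} aᵢ(k)·s(k) + eᵢ + mᵢ for i = 1, 2. Define in (ZMod Q)[X] the polynomials â = Σ_{k<N̲} a₁(k)·X^k + Σ_{k<N̲} a₂(k)·X^{N/2+k}, b̂ = C(b₁) + C(b₂)·X^{N/2}, and the modified secret ŝ = C(s(0)) − Σ_{k=1}^{N̲−1} s(k)·X^{N−k}. Then the remainder of b̂ − â·ŝ upon division by X^N + 1 has constant coefficient equal to m₁ + e₁ and coefficient at index N/2 equal to m₂ + e₂. That is, decrypting the packed pair (â, b̂) under ŝ recovers the two LWE messages (up to their noises) at coefficients 0 and N/2, without lifting the LWE dimension. -/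

import Mathlib

open Polynomial Finset

theorem coeff_modByMonic_X_pow_add_one {R : Type*} [CommRing R] (N : ℕ) (hN : 0 < N)
    (f : R[X]) (hf : f.natDegree < 2 * N) (i : ℕ) (hi : i < N) :
    (f %ₘ (X ^ N + 1)).coeff i = f.coeff i - f.coeff (N + i) := by
  nontriviality R
  have hm : (X ^ N + 1 : R[X]).Monic := by
    have := monic_X_pow_add (p := (1 : R[X])) (n := N)
      (by simpa using hN)
    simpa using this
  set q := f /ₘ (X ^ N + 1) with hq
  set r := f %ₘ (X ^ N + 1) with hr
  have key : r + (X ^ N + 1) * q = f := modByMonic_add_div f (X ^ N + 1)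
  have hdegm : (X ^ N + 1 : R[X]).natDegree = N := by
    have := natDegree_X_pow_add_C (n := N) (r := (1 : R))
    simpa using this
  have hdr : r.degree < (N : WithBot ℕ) := by
    have := degree_modByMonic_lt f hm
    rwa [show ((X ^ N + 1 : R[X]).degree) = (N : WithBot ℕ) by
      simpa using degree_X_pow_add_C hN (1 : R)] at this
  have hqd : q.natDegree < N := by
    have h := natDegree_divByMonic f hm
    rw [hdegm] at h
    rw [hq, h]; omega
  have hmul : ∀ j : ℕ, ((X ^ N + 1 : R[X]) * q).coeff j
      = (if N ≤ j then q.coeff (j - N) else 0) + q.coeff j := by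
    intro j
    rw [add_mul, one_mul, coeff_add, X_pow_mul, coeff_mul_X_pow']
  have hrNi : r.coeff (N + i) = 0 :=
    coeff_eq_zero_of_degree_lt (lt_of_lt_of_le hdr (by exact_mod_cast Nat.le_add_right N i))
  have hqNi : q.coeff (N + i) = 0 :=
    coeff_eq_zero_of_natDegree_lt (by omega)
  have h1 : f.coeff i = r.coeff i + q.coeff i := by
    rw [← key, coeff_add, hmul]
    simp [Nat.not_le.mpr hi]
  have h2 : f.coeff (N + i) = q.coeff i := by
    rw [← key, coeff_add, hmul, hrNi, hqNi]
    simp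
  rw [h1, h2]; ring

/-- Correctness of FastPackLWEs: given two LWE ciphertexts `(a₁, b₁)`, `(a₂, b₂)` of
dimension `N/2` under secret `s`, with `bᵢ = ⟨aᵢ, s⟩ + eᵢ + mᵢ`, the packed pair
`(â, b̂)` with `â = Σ a₁(k)X^k + Σ a₂(k)X^{N/2+k}`, `b̂ = C b₁ + C b₂ · X^{N/2}`
decrypts under the modified secret `ŝ = C(s 0) − Σ_{k=1}^{N/2−1} s(k)·X^{N−k}`: the
reduction of `b̂ − â·ŝ` modulo `X^N + 1` has constant coefficient `m₁ + e₁` and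
coefficient at `N/2` equal to `m₂ + e₂`. -/
theorem fastpack_correctness (Q : ℕ) (hQ : 0 < Q) (N : ℕ) (hN : 2 ≤ N) (hEven : Even N)
    (s a₁ a₂ : Fin (N / 2) → ZMod Q) (m₁ m₂ e₁ e₂ b₁ b₂ : ZMod Q)
    (hb₁ : b₁ = (∑ k : Fin (N / 2), a₁ k * s k) + e₁ + m₁)
    (hb₂ : b₂ = (∑ k : Fin (N / 2), a₂ k * s k) + e₂ + m₂) :
    let ahat : Polynomial (ZMod Q) :=
      (∑ k : Fin (N / 2), C (a₁ k) * X ^ (k : ℕ))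
        + ∑ k : Fin (N / 2), C (a₂ k) * X ^ (N / 2 + (k : ℕ))
    let bhat : Polynomial (ZMod Q) := C b₁ + C b₂ * X ^ (N / 2)
    let shat : Polynomial (ZMod Q) :=
      C (s ⟨0, by omega⟩)
        - ∑ k ∈ univ.filter (fun k : Fin (N / 2) => (k : ℕ) ≠ 0),
            C (s k) * X ^ (N - (k : ℕ))
    ((bhat - ahat * shat) %ₘ (X ^ N + 1)).coeff 0 = m₁ + e₁ ∧
    ((bhat - ahat * shat) %ₘ (X ^ N + 1)).coeff (N / 2) = m₂ + e₂ := by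
  intro ahat bhat shat
  have hM0 : 0 < N / 2 := by omega
  have hhalf : N / 2 + N / 2 = N := by
    obtain ⟨m, hm⟩ := hEven; omega
  have hahat : ahat = (∑ k : Fin (N / 2), C (a₁ k) * X ^ (k : ℕ))
        + ∑ k : Fin (N / 2), C (a₂ k) * X ^ (N / 2 + (k : ℕ)) := rfl
  have hbhat : bhat = C b₁ + C b₂ * X ^ (N / 2) := rfl
  have hshat : shat = C (s ⟨0, hM0⟩)
        - ∑ k ∈ univ.filter (fun k : Fin (N / 2) => (k : ℕ) ≠ 0),
            C (s k) * X ^ (N - (k : ℕ)) := rfl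
  -- coefficients of ahat
  have hA1 : ∀ t : Fin (N / 2), ahat.coeff (t : ℕ) = a₁ t := by
    intro t
    rw [hahat, coeff_add, finset_sum_coeff, finset_sum_coeff]
    have e1 : ∑ k : Fin (N / 2), (C (a₁ k) * X ^ (k : ℕ)).coeff (t : ℕ) = a₁ t := by
      rw [Finset.sum_eq_single t]
      · simp
      · intro k _ hk
        have : (k : ℕ) ≠ (t : ℕ) := fun h => hk (Fin.ext h)
        rw [coeff_C_mul, coeff_X_pow, if_neg (by omega), mul_zero]
      · simp
    have e2 : ∑ k : Fin (N / 2), (C (a₂ k) * X ^ (N / 2 + (k : ℕ))).coeff (t : ℕ) = 0 := by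
      apply Finset.sum_eq_zero
      intro k _
      have ht := t.isLt
      rw [coeff_C_mul, coeff_X_pow, if_neg (by omega), mul_zero]
    rw [e1, e2, add_zero]
  have hA2 : ∀ t : Fin (N / 2), ahat.coeff (N / 2 + (t : ℕ)) = a₂ t := by
    intro t
    rw [hahat, coeff_add, finset_sum_coeff, finset_sum_coeff]
    have e1 : ∑ k : Fin (N / 2), (C (a₁ k) * X ^ (k : ℕ)).coeff (N / 2 + (t : ℕ)) = 0 := by
      apply Finset.sum_eq_zero
      intro k _
      have hk := k.isLt
      rw [coeff_C_mul, coeff_X_pow, if_neg (by omega), mul_zero]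
    have e2 : ∑ k : Fin (N / 2), (C (a₂ k) * X ^ (N / 2 + (k : ℕ))).coeff (N / 2 + (t : ℕ))
        = a₂ t := by
      rw [Finset.sum_eq_single t]
      · simp
      · intro k _ hk
        have : (k : ℕ) ≠ (t : ℕ) := fun h => hk (Fin.ext h)
        rw [coeff_C_mul, coeff_X_pow, if_neg (by omega), mul_zero]
      · simp
    rw [e1, e2, zero_add]
  have hA3 : ahat.coeff N = 0 := by
    rw [hahat, coeff_add, finset_sum_coeff, finset_sum_coeff]
    have e1 : ∑ k : Fin (N / 2), (C (a₁ k) * X ^ (k : ℕ)).coeff N = 0 := by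
      apply Finset.sum_eq_zero; intro k _
      have hk := k.isLt
      rw [coeff_C_mul, coeff_X_pow, if_neg (by omega), mul_zero]
    have e2 : ∑ k : Fin (N / 2), (C (a₂ k) * X ^ (N / 2 + (k : ℕ))).coeff N = 0 := by
      apply Finset.sum_eq_zero; intro k _
      have hk := k.isLt
      rw [coeff_C_mul, coeff_X_pow, if_neg (by omega), mul_zero]
    rw [e1, e2, add_zero]
  have hA4 : ahat.coeff (N + N / 2) = 0 := by
    rw [hahat, coeff_add, finset_sum_coeff, finset_sum_coeff]
    have e1 : ∑ k : Fin (N / 2), (C (a₁ k) * X ^ (k : ℕ)).coeff (N + N / 2) = 0 := by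
      apply Finset.sum_eq_zero; intro k _
      have hk := k.isLt
      rw [coeff_C_mul, coeff_X_pow, if_neg (by omega), mul_zero]
    have e2 : ∑ k : Fin (N / 2), (C (a₂ k) * X ^ (N / 2 + (k : ℕ))).coeff (N + N / 2) = 0 := by
      apply Finset.sum_eq_zero; intro k _
      have hk := k.isLt
      rw [coeff_C_mul, coeff_X_pow, if_neg (by omega), mul_zero]
    rw [e1, e2, add_zero]
  -- coefficients of the product
  have hP : ∀ j : ℕ, (ahat * shat).coeff j
      = ahat.coeff j * s ⟨0, hM0⟩
        - ∑ k ∈ univ.filter (fun k : Fin (N / 2) => (k : ℕ) ≠ 0),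
            (if N - (k : ℕ) ≤ j then ahat.coeff (j - (N - (k : ℕ))) * s k else 0) := by
    intro j
    rw [hshat, mul_sub, coeff_sub, coeff_mul_C, Finset.mul_sum, finset_sum_coeff]
    congr 1
    apply Finset.sum_congr rfl
    intro k _
    rw [show ahat * (C (s k) * X ^ (N - (k : ℕ)))
        = (ahat * C (s k)) * X ^ (N - (k : ℕ)) by ring, coeff_mul_X_pow']
    split_ifs with h
    · rw [coeff_mul_C]
    · rfl
  have hP0 : (ahat * shat).coeff 0 = a₁ ⟨0, hM0⟩ * s ⟨0, hM0⟩ := by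
    rw [hP 0]
    have e : ∑ k ∈ univ.filter (fun k : Fin (N / 2) => (k : ℕ) ≠ 0),
        (if N - (k : ℕ) ≤ 0 then ahat.coeff (0 - (N - (k : ℕ))) * s k else 0) = 0 := by
      apply Finset.sum_eq_zero; intro k _
      have hk := k.isLt
      rw [if_neg]; omega
    rw [e, sub_zero]
    have h0 : ahat.coeff 0 = a₁ ⟨0, hM0⟩ := by simpa using hA1 ⟨0, hM0⟩
    rw [h0]
  have hPM : (ahat * shat).coeff (N / 2) = a₂ ⟨0, hM0⟩ * s ⟨0, hM0⟩ := by
    rw [hP (N / 2)]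
    have e : ∑ k ∈ univ.filter (fun k : Fin (N / 2) => (k : ℕ) ≠ 0),
        (if N - (k : ℕ) ≤ N / 2 then ahat.coeff (N / 2 - (N - (k : ℕ))) * s k else 0) = 0 := by
      apply Finset.sum_eq_zero; intro k _
      have hk := k.isLt
      rw [if_neg]; omega
    rw [e, sub_zero]
    have h0 : ahat.coeff (N / 2) = a₂ ⟨0, hM0⟩ := by simpa using hA2 ⟨0, hM0⟩
    rw [h0]
  have hPN : (ahat * shat).coeff N
      = - ∑ k ∈ univ.filter (fun k : Fin (N / 2) => (k : ℕ) ≠ 0), a₁ k * s k := by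
    rw [hP N, hA3, zero_mul, zero_sub, neg_inj]
    apply Finset.sum_congr rfl
    intro k hk
    have hk2 := k.isLt
    rw [if_pos (by omega), show N - (N - (k : ℕ)) = (k : ℕ) by omega, hA1 k]
  have hPNM : (ahat * shat).coeff (N + N / 2)
      = - ∑ k ∈ univ.filter (fun k : Fin (N / 2) => (k : ℕ) ≠ 0), a₂ k * s k := by
    rw [hP (N + N / 2), hA4, zero_mul, zero_sub, neg_inj]
    apply Finset.sum_congr rfl
    intro k hk
    have hk2 := k.isLt
    rw [if_pos (by omega), show N + N / 2 - (N - (k : ℕ)) = N / 2 + (k : ℕ) by omega, hA2 k]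
  -- coefficients of bhat
  have hB0 : bhat.coeff 0 = b₁ := by
    rw [hbhat, coeff_add, coeff_C_mul, coeff_X_pow, if_neg (by omega), coeff_C, if_pos rfl,
      mul_zero, add_zero]
  have hBM : bhat.coeff (N / 2) = b₂ := by
    rw [hbhat, coeff_add, coeff_C_mul, coeff_X_pow, if_pos rfl, coeff_C, if_neg (by omega),
      mul_one, zero_add]
  have hBN : bhat.coeff N = 0 := by
    rw [hbhat, coeff_add, coeff_C_mul, coeff_X_pow, if_neg (by omega), coeff_C,
      if_neg (by omega), mul_zero, add_zero]
  have hBNM : bhat.coeff (N + N / 2) = 0 := by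
    rw [hbhat, coeff_add, coeff_C_mul, coeff_X_pow, if_neg (by omega), coeff_C,
      if_neg (by omega), mul_zero, add_zero]
  -- degree bound
  have hAdeg : ahat.natDegree ≤ N - 1 := by
    rw [hahat]
    refine le_trans (natDegree_add_le _ _) (max_le ?_ ?_) <;>
    · refine le_trans (natDegree_sum_le _ _) ?_
      rw [Finset.fold_max_le]
      refine ⟨by omega, fun k _ => ?_⟩
      have hk := k.isLt
      simp only [Function.comp_apply]
      refine le_trans (natDegree_C_mul_le _ _) (le_trans (natDegree_X_pow_le _) (by omega))
  have hSdeg : shat.natDegree ≤ N - 1 := by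
    rw [hshat]
    refine le_trans (natDegree_sub_le _ _) (max_le ?_ ?_)
    · exact le_trans (le_of_eq (natDegree_C _)) (Nat.zero_le _)
    · refine le_trans (natDegree_sum_le _ _) ?_
      rw [Finset.fold_max_le]
      refine ⟨by omega, fun k hk => ?_⟩
      have hk1 : (k : ℕ) ≠ 0 := (Finset.mem_filter.mp hk).2
      have hk2 := k.isLt
      simp only [Function.comp_apply]
      refine le_trans (natDegree_C_mul_le _ _) (le_trans (natDegree_X_pow_le _) (by omega))
  have hfdeg : (bhat - ahat * shat).natDegree < 2 * N := by
    refine lt_of_le_of_lt (natDegree_sub_le _ _) ?_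
    have h1 : bhat.natDegree ≤ N := by
      rw [hbhat]
      refine le_trans (natDegree_add_le _ _) (max_le (by simp) ?_)
      refine le_trans (natDegree_C_mul_le _ _) (le_trans (natDegree_X_pow_le _) (by omega))
    have h2 : (ahat * shat).natDegree ≤ (N - 1) + (N - 1) :=
      le_trans natDegree_mul_le (add_le_add hAdeg hSdeg)
    exact max_lt (by omega) (by omega)
  -- splitting the inner product
  have hsplit : ∀ c : Fin (N / 2) → ZMod Q,
      ∑ k : Fin (N / 2), c k * s k
        = c ⟨0, hM0⟩ * s ⟨0, hM0⟩
          + ∑ k ∈ univ.filter (fun k : Fin (N / 2) => (k : ℕ) ≠ 0), c k * s k := by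
    intro c
    rw [← Finset.sum_filter_add_sum_filter_not univ (fun k : Fin (N / 2) => (k : ℕ) ≠ 0)]
    have : univ.filter (fun k : Fin (N / 2) => ¬ (k : ℕ) ≠ 0) = {⟨0, hM0⟩} := by
      ext k
      simp [Fin.ext_iff]
    rw [this, Finset.sum_singleton, add_comm]
  have hmod0 := coeff_modByMonic_X_pow_add_one N (by omega) (bhat - ahat * shat) hfdeg 0 (by omega)
  have hmodM := coeff_modByMonic_X_pow_add_one N (by omega) (bhat - ahat * shat) hfdeg (N / 2)
    (by omega)
  constructor
  · rw [hmod0, coeff_sub, coeff_sub, hB0, hP0, Nat.add_zero, hBN, hPN, hb₁, hsplit a₁]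
    ring
  · rw [hmodM, coeff_sub, coeff_sub, hBM, hPM, hBNM, hPNM, hb₂, hsplit a₂]
    ring
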